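/- arXiv:2505.18751 — 2 statements merged into one kernel-verified Lean document; each statement's English description precedes it below -/
import Mathlib

section
/- For a positive semidefinite Hermitian operator H on a finite-dimensional complex Hilbert space, the von Neumann entropy of the Gibbs state ρ_β = exp(-βH)/Tr(exp(-βH)) converges, as β → ∞, to the logarithm of the dimension of the kernel of H (assuming ker H is nonzero). -/
open Filter Matrix
open scoped ComplexOrder

/-- For a positive semidefinite Hermitian operator `H` on a finite-dimensional complex Hilbert
space with nonzero kernel, the von Neumann entropy `S(ρ_β) = -Tr(ρ_β log ρ_β)` of the Gibbs
state `ρ_β = exp(-βH) / Tr(exp(-βH))` — computed via its eigenvalues `exp(-β λ_i) / Z(β)`,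
where `λ_i` are the eigenvalues of `H`, with the convention `0 log 0 = 0` — converges as
`β → ∞` to the logarithm of the dimension of `ker H`. -/
theorem stmt1 {n : ℕ} (H : Matrix (Fin n) (Fin n) ℂ) (hH : H.PosSemidef)
    (hker : LinearMap.ker H.mulVecLin ≠ ⊥) :
    Tendsto (fun β : ℝ =>
        -∑ i : Fin n,
          (Real.exp (-β * hH.1.eigenvalues i) / ∑ j : Fin n, Real.exp (-β * hH.1.eigenvalues j)) *
            Real.log
              (Real.exp (-β * hH.1.eigenvalues i) /
                ∑ j : Fin n, Real.exp (-β * hH.1.eigenvalues j)))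
      atTop
      (nhds (Real.log (Module.finrank ℂ (LinearMap.ker H.mulVecLin)))) := by
  classical
  set f : Fin n → ℝ := hH.1.eigenvalues with hf_def
  have hf0 : ∀ i, 0 ≤ f i := fun i => hH.eigenvalues_nonneg i
  set k : ℕ := (Finset.univ.filter (fun i => f i = 0)).card with hk_def
  -- dimension of kernel equals number of zero eigenvalues
  have hA : Module.finrank ℂ (LinearMap.ker H.mulVecLin) = k := by
    have h1 := LinearMap.finrank_range_add_finrank_ker H.mulVecLin
    have h2 : H.rank = Fintype.card {i // f i ≠ 0} := hH.1.rank_eq_card_non_zero_eigs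
    have h3 : Fintype.card {i // f i ≠ 0}
        = (Finset.univ.filter (fun i => f i ≠ 0)).card := Fintype.card_subtype _
    have h4 : k + (Finset.univ.filter (fun i => f i ≠ 0)).card = n := by
      have := Finset.card_filter_add_card_filter_not
        (s := (Finset.univ : Finset (Fin n))) (p := fun i => f i = 0)
      simpa [hk_def] using this
    have h5 : Module.finrank ℂ (Fin n → ℂ) = n := Module.finrank_fin_fun ℂ
    have h6 : H.rank = Module.finrank ℂ (LinearMap.range H.mulVecLin) := rfl
    omega
  have hkpos : 0 < k := by
    rcases Nat.eq_zero_or_pos k with h | h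
    · exact absurd (Submodule.finrank_eq_zero.mp (by rw [hA, h])) hker
    · exact h
  have hkR : (0:ℝ) < (k:ℝ) := by exact_mod_cast hkpos
  have hn : 0 < n := by
    have : k ≤ n := by
      simpa using Finset.card_filter_le (Finset.univ : Finset (Fin n)) (fun i => f i = 0)
    omega
  haveI : Nonempty (Fin n) := ⟨⟨0, hn⟩⟩
  set Z : ℝ → ℝ := fun β => ∑ j : Fin n, Real.exp (-β * f j) with hZ_def
  have hZpos : ∀ β, 0 < Z β := fun β =>
    Finset.sum_pos (fun j _ => Real.exp_pos _) Finset.univ_nonempty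
  set N : ℝ → ℝ := fun β => ∑ i : Fin n, (β * f i) * Real.exp (-β * f i) with hN_def
  -- rewrite the entropy
  have hrw : ∀ β : ℝ,
      -∑ i : Fin n, (Real.exp (-β * f i) / Z β) * Real.log (Real.exp (-β * f i) / Z β)
        = N β / Z β + Real.log (Z β) := by
    intro β
    have hZ := hZpos β
    have h1 : ∀ i : Fin n,
        (Real.exp (-β * f i) / Z β) * Real.log (Real.exp (-β * f i) / Z β)
          = -((β * f i) * Real.exp (-β * f i) / Z β)
            - (Real.exp (-β * f i) / Z β) * Real.log (Z β) := by
      intro i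
      rw [Real.log_div (Real.exp_ne_zero _) (ne_of_gt hZ), Real.log_exp]
      field_simp
    rw [Finset.sum_congr rfl (fun i _ => h1 i)]
    have s1 : ∑ i : Fin n, β * f i * Real.exp (-β * f i) / Z β = N β / Z β :=
      (Finset.sum_div _ _ _).symm
    have s2 : ∑ i : Fin n, Real.exp (-β * f i) / Z β * Real.log (Z β)
        = Real.log (Z β) := by
      rw [← Finset.sum_mul, ← Finset.sum_div]
      have : (∑ x : Fin n, Real.exp (-β * f x)) = Z β := rfl
      rw [this, div_self (ne_of_gt hZ), one_mul]
    rw [Finset.sum_sub_distrib, Finset.sum_neg_distrib, s1, s2]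
    ring
  -- Z tends to k
  have hZlim : Tendsto Z atTop (nhds (k:ℝ)) := by
    have hsum : ((k:ℝ)) = ∑ i : Fin n, (if f i = 0 then (1:ℝ) else 0) := by
      rw [Finset.sum_boole]
    rw [hsum]
    apply tendsto_finset_sum
    intro i _
    by_cases h : f i = 0
    · simpa [h] using tendsto_const_nhds (x := (1:ℝ)) (f := (atTop : Filter ℝ))
    · have hpos : 0 < f i := lt_of_le_of_ne (hf0 i) (Ne.symm h)
      have h1 : Tendsto (fun β : ℝ => β * f i) atTop atTop :=
        Tendsto.atTop_mul_const hpos tendsto_id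
      have h2 : Tendsto (fun β : ℝ => -β * f i) atTop atBot := by
        simpa [neg_mul] using h1
      simpa [h, Function.comp_def] using Real.tendsto_exp_atBot.comp h2
  -- N tends to 0
  have hNlim : Tendsto N atTop (nhds 0) := by
    have hsum0 : (0:ℝ) = ∑ _i : Fin n, (0:ℝ) := by simp
    rw [hsum0]
    apply tendsto_finset_sum
    intro i _
    by_cases h : f i = 0
    · simpa [h] using tendsto_const_nhds (x := (0:ℝ)) (f := (atTop : Filter ℝ))
    · have hpos : 0 < f i := lt_of_le_of_ne (hf0 i) (Ne.symm h)
      have h1 : Tendsto (fun β : ℝ => β * f i) atTop atTop :=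
        Tendsto.atTop_mul_const hpos tendsto_id
      have h2 : Tendsto (fun x : ℝ => x * Real.exp (-x)) atTop (nhds 0) := by
        simpa using Real.tendsto_pow_mul_exp_neg_atTop_nhds_zero 1
      have := h2.comp h1
      simpa [Function.comp_def, neg_mul] using this
  -- conclude
  have hfinal : Tendsto (fun β => N β / Z β + Real.log (Z β)) atTop
      (nhds (Real.log (k:ℝ))) := by
    have hdiv : Tendsto (fun β => N β / Z β) atTop (nhds 0) := by
      have := hNlim.div hZlim (ne_of_gt hkR)
      rw [zero_div] at this
      exact this
    have hlog : Tendsto (fun β => Real.log (Z β)) atTop (nhds (Real.log (k:ℝ))) :=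
      (Real.continuousAt_log (ne_of_gt hkR)).tendsto.comp hZlim
    simpa using hdiv.add hlog
  rw [hA]
  exact hfinal.congr (fun β => (hrw β).symm)
end

section
/- Let V be a finite-dimensional complex vector space and P an endomorphism of V ⊗ V. For N ≥ 2, let P_{i,i+1} denote P acting on the i-th and (i+1)-th tensor factors of V^{⊗N} (indices taken cyclically mod N). Suppose all the P_{i,i+1} pairwise commute. Then the trace of the cyclic product P_{1,2}P_{2,3}⋯P_{N-1,N}P_{N,1} equals Tr(A^N), where A is the endomorphism of V ⊗ V with matrix entries A^{(i,i')}_{(j,j')} = P^{(i,j')}_{(i',j)} in terms of the matrix entries of P with respect to a fixed basis of V. -/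
open Matrix

/-- The operator on `V^{⊗N}` (with `V = ℂ^n`, basis indexed by `Fin n`, and tensor-power basis
indexed by `Fin N → Fin n`) acting as `P` on the cyclically adjacent tensor factors `i, i+1`
(indices mod `N`) and as the identity on all other factors. -/
def cycOp {n N : ℕ} [NeZero N] (P : Matrix (Fin n × Fin n) (Fin n × Fin n) ℂ) (i : Fin N) :
    Matrix (Fin N → Fin n) (Fin N → Fin n) ℂ :=
  Matrix.of fun x y =>
    P (x i, x (i + 1)) (y i, y (i + 1)) *
      ∏ j ∈ Finset.univ.filter fun j : Fin N => j ≠ i ∧ j ≠ i + 1,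
        if x j = y j then (1 : ℂ) else 0

/-- The matrix `A` obtained from `P` by swapping the first upper and first lower index:
`A^{(i,i')}_{(j,j')} = P^{(i,j')}_{(i',j)}`. -/
def swapIdx {n : ℕ} (P : Matrix (Fin n × Fin n) (Fin n × Fin n) ℂ) :
    Matrix (Fin n × Fin n) (Fin n × Fin n) ℂ :=
  Matrix.of fun p q => P (p.1, q.2) (p.2, q.1)


lemma prod_ofFn_apply {ι : Type} [Fintype ι] [DecidableEq ι] :
    ∀ (m : ℕ) (M : Fin (m+1) → Matrix ι ι ℂ) (x y : ι),
    (List.ofFn M).prod x y =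
      ∑ w : Fin m → ι, ∏ i : Fin (m+1),
        M i ((Fin.cons x (Fin.snoc w y) : Fin (m+2) → ι) i.castSucc)
            ((Fin.cons x (Fin.snoc w y) : Fin (m+2) → ι) i.succ) := by
  intro m
  induction m with
  | zero =>
    intro M x y
    simp [List.ofFn_succ, Fintype.sum_unique, Fin.prod_univ_succ, Fin.snoc]
  | succ m ih =>
    intro M x y
    rw [List.ofFn_succ, List.prod_cons, Matrix.mul_apply]
    have key : ∀ k : ι, (List.ofFn fun i : Fin (m+1) => M i.succ).prod k y =
        ∑ w : Fin m → ι, ∏ i : Fin (m+1),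
          M i.succ ((Fin.cons k (Fin.snoc w y) : Fin (m+2) → ι) i.castSucc)
              ((Fin.cons k (Fin.snoc w y) : Fin (m+2) → ι) i.succ) :=
      fun k => ih _ k y
    simp_rw [key, Finset.mul_sum]
    rw [← Equiv.sum_comp (Fin.consEquiv (fun _ : Fin (m+1) => ι))]
    rw [Fintype.sum_prod_type]
    apply Finset.sum_congr rfl
    intro k _
    apply Finset.sum_congr rfl
    intro w _
    have hce : ((Fin.consEquiv (fun _ : Fin (m+1) => ι)) (k, w)) = Fin.cons k w := rfl
    rw [hce]
    have hpath : ∀ t : Fin (m+2),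
        (Fin.cons x (Fin.snoc (Fin.cons k w) y) : Fin (m+3) → ι) t.succ
          = (Fin.cons k (Fin.snoc w y) : Fin (m+2) → ι) t := by
      intro t
      rw [Fin.cons_succ, ← Fin.cons_snoc_eq_snoc_cons]
    conv_rhs => rw [Fin.prod_univ_succ]
    congr 1
    · apply Finset.prod_congr rfl
      intro i _
      rw [← Fin.succ_castSucc, hpath, hpath]

lemma trace_prod_ofFn {ι : Type} [Fintype ι] [DecidableEq ι]
    (m : ℕ) (M : Fin (m+1) → Matrix ι ι ℂ) :
    Matrix.trace (List.ofFn M).prod =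
      ∑ z : Fin (m+1) → ι, ∏ i : Fin (m+1), M i (z i) (z (i+1)) := by
  rw [Matrix.trace]
  simp only [Matrix.diag_apply, prod_ofFn_apply]
  conv_rhs => rw [← Equiv.sum_comp (Fin.consEquiv (fun _ : Fin (m+1) => ι)), Fintype.sum_prod_type]
  apply Finset.sum_congr rfl
  intro x _
  apply Finset.sum_congr rfl
  intro w _
  apply Finset.prod_congr rfl
  intro i _
  have hce : ((Fin.consEquiv (fun _ : Fin (m+1) => ι)) (x, w)) = Fin.cons x w := rfl
  rw [hce]
  have ha : ∀ t : Fin (m+1),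
      (Fin.cons x (Fin.snoc w x) : Fin (m+2) → ι) t.castSucc
        = (Fin.cons x w : Fin (m+1) → ι) t := by
    intro t
    refine Fin.cases ?_ (fun j => ?_) t
    · rw [Fin.castSucc_zero, Fin.cons_zero, Fin.cons_zero]
    · rw [← Fin.succ_castSucc, Fin.cons_succ, Fin.snoc_castSucc, Fin.cons_succ]
  congr 1
  · exact ha i
  · refine Fin.lastCases ?_ (fun j => ?_) i
    · rw [Fin.succ_last, ← Fin.succ_last, Fin.cons_succ, Fin.snoc_last,
        Fin.last_add_one, Fin.cons_zero]
    · rw [Fin.succ_castSucc, ha j.succ, Fin.coeSucc_eq_succ]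

open Fin.CommRing in
lemma main_sum {n m : ℕ} (hm : 1 ≤ m) (P : Matrix (Fin n × Fin n) (Fin n × Fin n) ℂ) :
    ∑ z : Fin (m+1) → (Fin (m+1) → Fin n), ∏ i : Fin (m+1), cycOp P i (z i) (z (i+1))
      = ∑ p : Fin (m+1) → Fin n × Fin n, ∏ i : Fin (m+1), swapIdx P (p i) (p (i+1)) := by
  set N := m + 1 with hNdef
  have hN2 : 2 ≤ N := by omega
  set Φ : (Fin N → Fin n × Fin n) → (Fin N → Fin N → Fin n) :=
    fun p i j => if i = j then (p j).1 else (p j).2 with hΦ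
  have hone : ∀ j : Fin N, j + 1 ≠ j := by
    intro j h
    have h1 : (1 : Fin N) = 0 := by
      have := add_right_cancel (a := (1 : Fin N)) (b := j) (c := 0)
      rw [add_comm] at h
      simpa using congrArg (fun t => t - j) h
    have : (1 : Fin N).val = 1 := by
      simp [Fin.val_one', Nat.mod_eq_of_lt (by omega : 1 < N)]
    rw [h1] at this
    simp at this
  have hΦinj : Function.Injective Φ := by
    intro p q h
    funext j
    have h1 := congrFun (congrFun h j) j
    have h2 := congrFun (congrFun h (j+1)) j
    simp only [hΦ, if_pos rfl] at h1
    simp only [hΦ, if_neg (hone j)] at h2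
    exact Prod.ext h1 h2
  have hchain : ∀ (z : Fin N → Fin N → Fin n),
      (∀ i j : Fin N, j ≠ i → j ≠ i + 1 → z i j = z (i+1) j) →
      ∀ j i : Fin N, i ≠ j → z i j = z (j+1) j := by
    intro z hz j i hij
    have natgen : ∀ k : ℕ, k ≤ N - 2 → z (j + 1 + (k : Fin N)) j = z (j+1) j := by
      intro k
      induction k with
      | zero => intro _; norm_num
      | succ k ihk =>
        intro hk
        have hk' : k ≤ N - 2 := by omega
        have hne1 : j ≠ j + 1 + (k : Fin N) := by
          intro h
          have : ((1 + k : ℕ) : Fin N) = 0 := by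
            push_cast
            have := congrArg (fun t => t - j) h
            simpa [add_assoc, add_comm, add_left_comm, sub_eq_iff_eq_add] using this.symm
          rw [Fin.natCast_eq_zero] at this
          have := Nat.le_of_dvd (by omega) this
          omega
        have hne2 : j ≠ (j + 1 + (k : Fin N)) + 1 := by
          intro h
          have : ((1 + k + 1 : ℕ) : Fin N) = 0 := by
            push_cast
            have := congrArg (fun t => t - j) h
            simpa [add_assoc, add_comm, add_left_comm, sub_eq_iff_eq_add] using this.symm
          rw [Fin.natCast_eq_zero] at this
          have := Nat.le_of_dvd (by omega) this
          omega
        have step := hz (j + 1 + (k : Fin N)) j hne1 hne2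
        have hidx : j + 1 + ((k+1 : ℕ) : Fin N) = (j + 1 + (k : Fin N)) + 1 := by
          push_cast; ring
        rw [hidx, ← step]
        exact ihk hk'
    have hk := natgen (i - (j+1)).val
    have hcast : (((i - (j+1)).val : ℕ) : Fin N) = i - (j+1) := Fin.cast_val_eq_self _
    have hidx : j + 1 + ((((i - (j+1)).val : ℕ)) : Fin N) = i := by
      rw [hcast]; ring
    have hle : (i - (j+1)).val ≤ N - 2 := by
      by_contra hcon
      have hlt : (i - (j+1)).val < N := (i - (j+1)).isLt
      have heq : (i - (j+1)).val = N - 1 := by omega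
      have : i - j = 0 := by
        have h1 : i - (j+1) = ((N - 1 : ℕ) : Fin N) := by rw [← heq, hcast]
        have h2 : i - j = i - (j+1) + 1 := by ring
        rw [h2, h1]
        have : ((N - 1 : ℕ) : Fin N) + 1 = ((N - 1 + 1 : ℕ) : Fin N) := by push_cast; ring
        rw [this]
        have : N - 1 + 1 = N := by omega
        rw [this]
        exact Fin.natCast_self N
      exact hij (by simpa [sub_eq_zero] using this)
    rw [← hidx]
    exact hk hle
  have hsupp : ∀ z : Fin N → Fin N → Fin n, z ∉ Set.range Φ →
      ∏ i : Fin N, cycOp P i (z i) (z (i+1)) = 0 := by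
    intro z hz
    by_contra hne
    apply hz
    have hfac : ∀ i j : Fin N, j ≠ i → j ≠ i + 1 → z i j = z (i+1) j := by
      intro i j h1 h2
      by_contra hzz
      apply hne
      apply Finset.prod_eq_zero (Finset.mem_univ i)
      show cycOp P i (z i) (z (i+1)) = 0
      unfold cycOp
      rw [Matrix.of_apply]
      have : ∏ j' ∈ Finset.univ.filter fun j' : Fin N => j' ≠ i ∧ j' ≠ i + 1,
          (if z i j' = z (i+1) j' then (1:ℂ) else 0) = 0 := by
        apply Finset.prod_eq_zero (i := j)
        · simp [h1, h2]
        · rw [if_neg hzz]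
      rw [this, mul_zero]
    refine ⟨fun j => (z j j, z (j+1) j), ?_⟩
    funext i j
    simp only [hΦ]
    by_cases h : i = j
    · subst h; simp
    · rw [if_neg h]
      exact (hchain z hfac j i h).symm
  have himg : ∑ z : Fin N → Fin N → Fin n, ∏ i : Fin N, cycOp P i (z i) (z (i+1))
      = ∑ z ∈ Finset.univ.image Φ, ∏ i : Fin N, cycOp P i (z i) (z (i+1)) := by
    symm
    apply Finset.sum_subset (Finset.subset_univ _)
    intro z _ hzn
    apply hsupp
    intro ⟨p, hp⟩
    exact hzn (Finset.mem_image.mpr ⟨p, Finset.mem_univ p, hp⟩)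
  rw [himg, Finset.sum_image (fun p _ q _ h => hΦinj h)]
  apply Finset.sum_congr rfl
  intro p _
  apply Finset.prod_congr rfl
  intro i _
  show cycOp P i (Φ p i) (Φ p (i+1)) = swapIdx P (p i) (p (i+1))
  unfold cycOp swapIdx
  rw [Matrix.of_apply, Matrix.of_apply]
  have e1 : Φ p i i = (p i).1 := if_pos rfl
  have e2 : Φ p i (i+1) = (p (i+1)).2 := if_neg (fun h => hone i h.symm)
  have e3 : Φ p (i+1) i = (p i).2 := if_neg (hone i)
  have e4 : Φ p (i+1) (i+1) = (p (i+1)).1 := if_pos rfl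
  rw [e1, e2, e3, e4]
  have : ∏ j ∈ Finset.univ.filter fun j : Fin N => j ≠ i ∧ j ≠ i + 1,
      (if Φ p i j = Φ p (i+1) j then (1:ℂ) else 0) = 1 := by
    apply Finset.prod_eq_one
    intro j hj
    rw [Finset.mem_filter] at hj
    obtain ⟨-, hj1, hj2⟩ := hj
    have a1 : Φ p i j = (p j).2 := if_neg (fun h => hj1 h.symm)
    have a2 : Φ p (i+1) j = (p j).2 := if_neg (fun h => hj2 h.symm)
    rw [a1, a2, if_pos rfl]
  rw [this, mul_one]

/-- If the cyclic local operators `P_{i,i+1}` on `V^{⊗N}` pairwise commute, the trace of the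
cyclic product `P_{1,2} P_{2,3} ⋯ P_{N-1,N} P_{N,1}` equals `Tr (A^N)` where `A` is obtained
from `P` by permuting tensor indices. -/
theorem stmt5 {n N : ℕ} [NeZero N] (hN : 2 ≤ N) (P : Matrix (Fin n × Fin n) (Fin n × Fin n) ℂ)
    (hcomm : ∀ i j : Fin N, cycOp P i * cycOp P j = cycOp P j * cycOp P i) :
    Matrix.trace (List.ofFn fun i : Fin N => cycOp P i).prod =
      Matrix.trace (swapIdx P ^ N) := by
  obtain ⟨m, rfl⟩ := Nat.exists_eq_succ_of_ne_zero (NeZero.ne N)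
  have hm : 1 ≤ m := by omega
  rw [trace_prod_ofFn m (fun i => cycOp P i)]
  rw [← List.prod_replicate, ← List.ofFn_const, trace_prod_ofFn]
  exact main_sum hm P
end
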